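/- Specialization of Gröbner bases: let 𝒢 ⊆ ℂ[W][X] be a Gröbner basis (with respect to a monomial order <_X on the X-variables, over the field ℂ(W)) of the ideal it generates in ℂ(W)[X]. Let w ∈ ℂ^s be such that for every g ∈ 𝒢 the leading coefficient of g with respect to <_X (an element of ℂ[W]) does not vanish at w. Then 𝒢(w) = {g(w,X) : g ∈ 𝒢} is a Gröbner basis, with respect to <_X, of the ideal ⟨g(w,X) : g ∈ 𝒢⟩ ⊆ ℂ[X]. -/
import Mathlib

open MvPolynomial

/-- The leading exponent (multidegree) of a multivariate polynomial with respect to a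
monomial order `m`. -/
noncomputable def lmDeg {n : ℕ} (m : MonomialOrder (Fin n)) {R : Type*} [CommSemiring R]
    (f : MvPolynomial (Fin n) R) : Fin n →₀ ℕ :=
  m.toSyn.symm (f.support.sup fun d => m.toSyn d)

/-- `G` is a Gröbner basis of the ideal `I` with respect to the monomial order `m`:
`G ⊆ I` and the leading monomial of every nonzero element of `I` is divisible by the
leading monomial of some nonzero element of `G`. -/
def IsGroebnerBasis {n : ℕ} (m : MonomialOrder (Fin n)) {F : Type*} [Field F]
    (I : Ideal (MvPolynomial (Fin n) F)) (G : Set (MvPolynomial (Fin n) F)) : Prop :=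
  (∀ g ∈ G, g ∈ I) ∧ ∀ f ∈ I, f ≠ 0 → ∃ g ∈ G, g ≠ 0 ∧ lmDeg m g ≤ lmDeg m f

section Aux

variable {n : ℕ} (m : MonomialOrder (Fin n)) {R S : Type*} [CommSemiring R] [CommSemiring S]

lemma lmDeg_zero : lmDeg m (0 : MvPolynomial (Fin n) R) = 0 := by
  rw [lmDeg]; simp

lemma toSyn_lmDeg (f : MvPolynomial (Fin n) R) :
    m.toSyn (lmDeg m f) = f.support.sup fun d => m.toSyn d :=
  m.toSyn.apply_symm_apply _

lemma le_lmDeg {f : MvPolynomial (Fin n) R} {d : Fin n →₀ ℕ} (h : d ∈ f.support) :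
    m.toSyn d ≤ m.toSyn (lmDeg m f) := by
  rw [toSyn_lmDeg]; exact Finset.le_sup h

lemma coeff_eq_zero_of_lmDeg_lt {f : MvPolynomial (Fin n) R} {d : Fin n →₀ ℕ}
    (h : m.toSyn (lmDeg m f) < m.toSyn d) : f.coeff d = 0 := by
  by_contra hc
  exact absurd (le_lmDeg m (mem_support_iff.mpr hc)) (not_le.mpr h)

lemma lmDeg_mem_support {f : MvPolynomial (Fin n) R} (hf : f ≠ 0) :
    lmDeg m f ∈ f.support := by
  obtain ⟨d, hd, he⟩ := f.support.exists_mem_eq_sup (support_nonempty.mpr hf)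
    (fun d => m.toSyn d)
  rw [lmDeg, he, AddEquiv.symm_apply_apply]
  exact hd

lemma lmDeg_coeff_ne_zero {f : MvPolynomial (Fin n) R} (hf : f ≠ 0) :
    f.coeff (lmDeg m f) ≠ 0 := mem_support_iff.mp (lmDeg_mem_support m hf)

lemma lmDeg_map_of_ne {φ : R →+* S} {f : MvPolynomial (Fin n) R}
    (h : φ (f.coeff (lmDeg m f)) ≠ 0) : lmDeg m (f.map φ) = lmDeg m f := by
  apply m.toSyn.injective
  apply le_antisymm
  · rw [toSyn_lmDeg, Finset.sup_le_iff]
    intro d hd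
    exact le_lmDeg m (MvPolynomial.support_map_subset _ _ hd)
  · apply le_lmDeg m
    rw [mem_support_iff, MvPolynomial.coeff_map]
    exact h

lemma lmDeg_map_of_injective {φ : R →+* S} (hφ : Function.Injective φ)
    (f : MvPolynomial (Fin n) R) : lmDeg m (f.map φ) = lmDeg m f := by
  rcases eq_or_ne f 0 with rfl | hf
  · rw [map_zero, lmDeg_zero, lmDeg_zero]
  · apply lmDeg_map_of_ne
    intro h0
    exact lmDeg_coeff_ne_zero m hf (hφ (by simpa using h0))

lemma lmDeg_smul {F : Type*} [Field F] {c : F} (hc : c ≠ 0)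
    (f : MvPolynomial (Fin n) F) : lmDeg m (c • f) = lmDeg m f := by
  have : (c • f).support = f.support := by
    ext d
    simp [mem_support_iff, MvPolynomial.coeff_smul, hc]
  rw [lmDeg, this, lmDeg]

end Aux

theorem groebner_basis_specialization
    (s n : ℕ) (m : MonomialOrder (Fin n))
    (G : Set (MvPolynomial (Fin n) (MvPolynomial (Fin s) ℂ)))
    (hGB : IsGroebnerBasis m
      (Ideal.span ((fun g => g.map (algebraMap (MvPolynomial (Fin s) ℂ)
          (FractionRing (MvPolynomial (Fin s) ℂ)))) '' G))
      ((fun g => g.map (algebraMap (MvPolynomial (Fin s) ℂ)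
          (FractionRing (MvPolynomial (Fin s) ℂ)))) '' G))
    (w : Fin s → ℂ)
    (hw : ∀ g ∈ G, MvPolynomial.eval w (g.coeff (lmDeg m g)) ≠ 0) :
    IsGroebnerBasis m
      (Ideal.span ((fun g => g.map (MvPolynomial.eval w)) '' G))
      ((fun g => g.map (MvPolynomial.eval w)) '' G) := by
  classical
  set A := MvPolynomial (Fin s) ℂ
  set K := FractionRing A
  obtain ⟨hGsub, hGmax⟩ := hGB
  set φ : A →+* K := algebraMap A K with hφdef
  have hφinj : Function.Injective φ := IsFractionRing.injective A K
  set ψ : MvPolynomial (Fin n) A →+* MvPolynomial (Fin n) K := MvPolynomial.map φ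
  set ev : A →+* ℂ := MvPolynomial.eval w
  set ψw : MvPolynomial (Fin n) A →+* MvPolynomial (Fin n) ℂ := MvPolynomial.map ev
  have hψwsurj : Function.Surjective ψw :=
    MvPolynomial.map_surjective ev (fun a => ⟨MvPolynomial.C a, MvPolynomial.eval_C a⟩)
  constructor
  · intro g hg
    exact Ideal.subset_span hg
  · intro f hf hf0
    -- find F₀ in span G specializing to f
    rw [show ((fun g => g.map ev) '' G : Set (MvPolynomial (Fin n) ℂ)) = ψw '' G from rfl,
      ← Ideal.map_span ψw, Ideal.mem_map_iff_of_surjective ψw hψwsurj] at hf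
    obtain ⟨F₀, hF₀mem, hF₀⟩ := hf
    -- main well-founded induction
    suffices H : ∀ a : m.syn, ∀ F : MvPolynomial (Fin n) A, m.toSyn (lmDeg m F) = a →
        F ∈ Ideal.span G → ∀ c : ℂ, c ≠ 0 → ψw F = c • f →
        ∃ g ∈ (fun g => g.map ev) '' G, g ≠ 0 ∧ lmDeg m g ≤ lmDeg m f by
      exact H _ F₀ rfl hF₀mem 1 one_ne_zero (by simpa using hF₀)
    intro a
    induction a using WellFoundedLT.induction with
    | ind a ih =>
      intro F hFa hFmem c hc hFev
      have hcf : c • f ≠ 0 := smul_ne_zero hc hf0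
      have hF0 : F ≠ 0 := by
        intro h; rw [h, map_zero] at hFev; exact hcf hFev.symm
      -- get a Gröbner basis element from the fraction-field GB
      have hψF : ψ F ∈ Ideal.span ((fun g => g.map φ) '' G) := by
        rw [show ((fun g => g.map φ) '' G : Set (MvPolynomial (Fin n) K)) = ψ '' G from rfl,
          ← Ideal.map_span ψ]
        exact Ideal.mem_map_of_mem ψ hFmem
      have hψF0 : ψ F ≠ 0 := by
        intro h
        exact hF0 (MvPolynomial.map_injective φ hφinj (by simpa using h))
      obtain ⟨gK, hgKG, hgK0, hgKle⟩ := hGmax (ψ F) hψF hψF0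
      obtain ⟨g, hgG, rfl⟩ := hgKG
      have hgmap : lmDeg m (g.map φ) = lmDeg m g := lmDeg_map_of_injective m hφinj g
      have hFmap : lmDeg m (ψ F) = lmDeg m F := lmDeg_map_of_injective m hφinj F
      have hgF : lmDeg m g ≤ lmDeg m F := by
        rw [hgmap, hFmap] at hgKle; exact hgKle
      have hwg : ev (g.coeff (lmDeg m g)) ≠ 0 := hw g hgG
      have hg0 : g ≠ 0 := by
        intro h; apply hwg; simp [h]
      by_cases hlc : ev (F.coeff (lmDeg m F)) = 0
      · -- reduction step
        set cg : A := g.coeff (lmDeg m g) with hcg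
        set lcF : A := F.coeff (lmDeg m F) with hlcF
        set δ : Fin n →₀ ℕ := lmDeg m F - lmDeg m g with hδ
        have hδle : δ ≤ lmDeg m F := tsub_le_self
        set F' : MvPolynomial (Fin n) A :=
          MvPolynomial.C cg * F - (MvPolynomial.C lcF * g) * MvPolynomial.monomial δ 1
          with hF'
        have hF'mem : F' ∈ Ideal.span G := by
          apply Ideal.sub_mem
          · exact Ideal.mul_mem_left _ _ hFmem
          · exact Ideal.mul_mem_right _ _ (Ideal.mul_mem_left _ _ (Ideal.subset_span hgG))
        have hF'ev : ψw F' = (ev cg * c) • f := by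
          rw [hF']
          rw [map_sub, map_mul, map_mul, map_mul]
          rw [MvPolynomial.map_C, MvPolynomial.map_C, MvPolynomial.map_monomial]
          rw [hlc]
          simp only [map_one, MvPolynomial.C_0, zero_mul]
          rw [hFev, sub_zero, MvPolynomial.C_mul', smul_smul]
        have hc' : ev cg * c ≠ 0 := mul_ne_zero hwg hc
        have hF'0 : F' ≠ 0 := by
          intro h
          rw [h, map_zero] at hF'ev
          exact smul_ne_zero hc' hf0 hF'ev.symm
        have key : ∀ d : Fin n →₀ ℕ, m.toSyn (lmDeg m F) ≤ m.toSyn d → F'.coeff d = 0 := by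
          intro d hd
          rw [hF', MvPolynomial.coeff_sub, MvPolynomial.coeff_mul_monomial',
            MvPolynomial.coeff_C_mul]
          rcases eq_or_lt_of_le hd with heq | hlt
          · have hdeq : d = lmDeg m F := m.toSyn.injective heq.symm
            subst hdeq
            rw [if_pos hδle, tsub_tsub_cancel_of_le hgF, MvPolynomial.coeff_C_mul]
            ring
          · have hFd : F.coeff d = 0 := coeff_eq_zero_of_lmDeg_lt m hlt
            rw [hFd, mul_zero, zero_sub, neg_eq_zero]
            split_ifs with hδd
            · rw [MvPolynomial.coeff_C_mul]
              have h1 : (d - δ) + δ = d := tsub_add_cancel_of_le hδd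
              have h2 : lmDeg m g + δ = lmDeg m F := by
                rw [hδ]; exact add_tsub_cancel_of_le hgF
              have h3 : m.toSyn (lmDeg m g) < m.toSyn (d - δ) := by
                have e1 : m.toSyn (d - δ) + m.toSyn δ = m.toSyn d := by
                  rw [← map_add, h1]
                have e2 : m.toSyn (lmDeg m g) + m.toSyn δ = m.toSyn (lmDeg m F) := by
                  rw [← map_add, h2]
                have := hlt
                rw [← e1, ← e2] at this
                exact lt_of_add_lt_add_right this
              rw [coeff_eq_zero_of_lmDeg_lt m h3, mul_zero, zero_mul]
            · rfl
        have hlt' : m.toSyn (lmDeg m F') < a := by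
          rw [← hFa]
          rcases lt_or_ge (m.toSyn (lmDeg m F')) (m.toSyn (lmDeg m F)) with h | h
          · exact h
          · exact absurd (key _ h) (lmDeg_coeff_ne_zero m hF'0)
        exact ih _ hlt' F' rfl hF'mem (ev cg * c) hc' hF'ev
      · -- the leading coefficient survives evaluation
        refine ⟨g.map ev, ⟨g, hgG, rfl⟩, ?_, ?_⟩
        · intro h
          apply hwg
          have := congrArg (fun p => MvPolynomial.coeff (lmDeg m g) p) h
          simpa [MvPolynomial.coeff_map] using this
        · have h1 : lmDeg m (g.map ev) = lmDeg m g := lmDeg_map_of_ne m hwg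
          have h2 : lmDeg m (ψw F) = lmDeg m F := lmDeg_map_of_ne m hlc
          rw [hFev, lmDeg_smul m hc] at h2
          rw [h1, h2]
          exact hgF
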